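/- Let G = (μ,V,W,E,P,f,g) be a GCD graph with edge density δ > 0. Let p ∈ R(G), r ∈ ℤ_{≥1} and k ∈ ℤ_{≥0} be such that p^r > C₄ and μ(W_{p^k})/μ(W) ≥ 1 − C₂/p. Set L_{k,r} = {ℓ ∈ ℤ_{≥0} : |ℓ − k| ≥ r+1}. Then one of the following holds: (a) there is ℓ ∈ L_{k,r} such that q(G_{p^k,p^ℓ}) > M·q(G); or (b) ∑_{ℓ∈L_{k,r}} μ(E_{p^k,p^ℓ}) ≤ μ(E)/(4p^{1+τ/4}). -/

import Mathlib

open Finset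

/-- A (bipartite) GCD graph: a measure `μ` on `ℕ`, finite vertex sets `V, W` of positive
integers, an edge set `E ⊆ V × W`, a (finite) set of primes `P`, and exponent functions
`f, g` such that for every `p ∈ P`: `p^{f(p)} ∣ v` for all `v ∈ V`, `p^{g(p)} ∣ w` for all
`w ∈ W`, and `p^{min(f(p),g(p))}` exactly divides `gcd(v, w)` for every edge `(v, w)`. -/
structure GCDGraph where
  mu : ℕ → ℝ
  mu_nonneg : ∀ n, 0 ≤ mu n
  V : Finset ℕ
  W : Finset ℕ
  V_pos : ∀ v ∈ V, 0 < v
  W_pos : ∀ w ∈ W, 0 < w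
  E : Finset (ℕ × ℕ)
  E_sub : E ⊆ V ×ˢ W
  P : Finset ℕ
  P_prime : ∀ p ∈ P, p.Prime
  f : ℕ → ℕ
  g : ℕ → ℕ
  f_dvd : ∀ p ∈ P, ∀ v ∈ V, p ^ f p ∣ v
  g_dvd : ∀ p ∈ P, ∀ w ∈ W, p ^ g p ∣ w
  gcd_exact : ∀ p ∈ P, ∀ e ∈ E,
    p ^ min (f p) (g p) ∣ Nat.gcd e.1 e.2 ∧ ¬ p ^ (min (f p) (g p) + 1) ∣ Nat.gcd e.1 e.2

namespace GCDGraph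

/-- The measure of a finite set of integers: `μ(S) = ∑_{n ∈ S} μ(n)`. -/
noncomputable def muSet (mu : ℕ → ℝ) (S : Finset ℕ) : ℝ := ∑ n ∈ S, mu n

/-- The measure of a finite set of pairs: `μ(E) = ∑_{(n₁,n₂) ∈ E} μ(n₁) μ(n₂)`. -/
noncomputable def muEdges (mu : ℕ → ℝ) (E : Finset (ℕ × ℕ)) : ℝ := ∑ e ∈ E, mu e.1 * mu e.2

/-- Edge density `δ = μ(E) / (μ(V) μ(W))` (equal to `0` when `μ(V) μ(W) = 0`,
by the Lean convention `x / 0 = 0`). -/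
noncomputable def densityRaw (mu : ℕ → ℝ) (V W : Finset ℕ) (E : Finset (ℕ × ℕ)) : ℝ :=
  muEdges mu E / (muSet mu V * muSet mu W)

/-- The quality
`q = δ^{2+τ} μ(V) μ(W) ∏_{p ∈ P} p^{|f(p)-g(p)|} (1 - 1_{f(p)=g(p)≥1}/p)^{-2} (1 - p^{-1-τ/4})^{-3}`. -/
noncomputable def qualityRaw (τ : ℝ) (mu : ℕ → ℝ) (V W : Finset ℕ) (E : Finset (ℕ × ℕ))
    (P : Finset ℕ) (f g : ℕ → ℕ) : ℝ :=
  densityRaw mu V W E ^ (2 + τ) * muSet mu V * muSet mu W *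
    ∏ p ∈ P, ((p : ℝ) ^ (((f p : ℤ) - (g p : ℤ)).natAbs) *
      ((1 - (if f p = g p ∧ 1 ≤ f p then ((p : ℝ))⁻¹ else 0))⁻¹) ^ 2 *
      ((1 - (p : ℝ) ^ (-1 - τ / 4))⁻¹) ^ 3)

/-- The edge density of a GCD graph. -/
noncomputable def density (G : GCDGraph) : ℝ := densityRaw G.mu G.V G.W G.E

/-- The quality of a GCD graph (with parameter `τ`). -/
noncomputable def quality (τ : ℝ) (G : GCDGraph) : ℝ :=
  qualityRaw τ G.mu G.V G.W G.E G.P G.f G.g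

/-- `G'` is a GCD subgraph of `G`. -/
def IsSubgraph (G' G : GCDGraph) : Prop :=
  G'.mu = G.mu ∧ G'.V ⊆ G.V ∧ G'.W ⊆ G.W ∧ G'.E ⊆ G.E ∧ G.P ⊆ G'.P ∧
    (∀ p ∈ G.P, G'.f p = G.f p) ∧ (∀ p ∈ G.P, G'.g p = G.g p)

/-- `G` is `(P,f,g)`-maximal: every GCD subgraph with the same multiplicative data has
quality at most `q(G)`. -/
def IsMaximal (τ : ℝ) (G : GCDGraph) : Prop :=
  ∀ G' : GCDGraph, IsSubgraph G' G → G'.P = G.P → quality τ G' ≤ quality τ G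

/-- `R(G)`: the set of primes `p ∉ P` dividing `gcd(v,w)` for some edge `(v,w)`. -/
def R (G : GCDGraph) : Set ℕ :=
  {p | p.Prime ∧ p ∉ G.P ∧ ∃ e ∈ G.E, p ∣ Nat.gcd e.1 e.2}

/-- `S_{p^k}`: the subset of elements of `S` exactly divisible by `p^k`. -/
def exactPart (S : Finset ℕ) (p k : ℕ) : Finset ℕ :=
  S.filter fun v => p ^ k ∣ v ∧ ¬ p ^ (k + 1) ∣ v

/-- `E_{p^k, p^ℓ} = E ∩ (V_{p^k} × W_{p^ℓ})`. -/
def edgesAt (G : GCDGraph) (p k l : ℕ) : Finset (ℕ × ℕ) :=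
  G.E.filter fun e => e.1 ∈ exactPart G.V p k ∧ e.2 ∈ exactPart G.W p l

/-- The quality of the GCD subgraph `G_{p^k, p^ℓ}`, with vertex sets `V_{p^k}`, `W_{p^ℓ}`,
edges `E_{p^k,p^ℓ}`, prime set `P ∪ {p}` and `f, g` extended by `f(p) = k`, `g(p) = ℓ`. -/
noncomputable def qualityAt (τ : ℝ) (G : GCDGraph) (p k l : ℕ) : ℝ :=
  qualityRaw τ G.mu (exactPart G.V p k) (exactPart G.W p l) (edgesAt G p k l)
    (insert p G.P) (Function.update G.f p k) (Function.update G.g p l)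

noncomputable def C1 (τ : ℝ) : ℝ := 10 ^ 4 / τ
noncomputable def C2 (τ M : ℝ) : ℝ := 10 * M * C1 τ ^ 3
noncomputable def C3 (τ : ℝ) : ℝ := 10 ^ 3 * C1 τ ^ 3
noncomputable def C4 (τ M : ℝ) : ℝ := 10 ^ 10 * M ^ 2 * C2 τ M ^ 2
noncomputable def C5 (τ M : ℝ) : ℝ := max (C3 τ) ((50 * Real.log (C4 τ M)) ^ 3)
noncomputable def C6 (τ M : ℝ) : ℝ :=
  max (C4 τ M) (max (10 ^ 4 * M * C2 τ M) (C2 τ M ^ (10 / τ)))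
noncomputable def C7 (τ M : ℝ) : ℝ := C5 τ M ^ C6 τ M

/-- `R♯(G)`: those `p ∈ R(G)` admitting `k ≥ 0` with `μ(V_{p^k})/μ(V) ≥ 1 − C₂/p` and
`μ(W_{p^k})/μ(W) ≥ 1 − C₂/p`, and such that `q(G_{p^a,p^b}) < M q(G)` for all `a ≠ b`. -/
def Rsharp (τ M : ℝ) (G : GCDGraph) : Set ℕ :=
  {p ∈ R G |
    (∃ k : ℕ, 1 - C2 τ M / (p : ℝ) ≤ muSet G.mu (exactPart G.V p k) / muSet G.mu G.V ∧
        1 - C2 τ M / (p : ℝ) ≤ muSet G.mu (exactPart G.W p k) / muSet G.mu G.W) ∧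
    ∀ a b : ℕ, a ≠ b → qualityAt τ G p a b < M * quality τ G}

/-- `R♭(G) = R(G) \ R♯(G)`. -/
def Rflat (τ M : ℝ) (G : GCDGraph) : Set ℕ := R G \ Rsharp τ M G

/-- The neighbourhood `Γ_G(v) = {w ∈ W : (v,w) ∈ E}` of a left vertex. -/
def nbhdOfV (G : GCDGraph) (v : ℕ) : Finset ℕ := G.W.filter fun w => (v, w) ∈ G.E

/-- The neighbourhood `Γ_G(w) = {v ∈ V : (v,w) ∈ E}` of a right vertex. -/
def nbhdOfW (G : GCDGraph) (w : ℕ) : Finset ℕ := G.V.filter fun v => (v, w) ∈ G.E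

end GCDGraph

open GCDGraph

private lemma muSet_nonneg (mu : ℕ → ℝ) (h : ∀ n, 0 ≤ mu n) (S : Finset ℕ) : 0 ≤ muSet mu S :=
  Finset.sum_nonneg fun n _ => h n

private lemma muSet_mono (mu : ℕ → ℝ) (h : ∀ n, 0 ≤ mu n) {S T : Finset ℕ} (hST : S ⊆ T) :
    muSet mu S ≤ muSet mu T :=
  Finset.sum_le_sum_of_subset_of_nonneg hST fun n _ _ => h n

private lemma muEdges_nonneg (mu : ℕ → ℝ) (h : ∀ n, 0 ≤ mu n) (E : Finset (ℕ × ℕ)) :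
    0 ≤ muEdges mu E := Finset.sum_nonneg fun e _ => mul_nonneg (h e.1) (h e.2)

private lemma muEdges_le (mu : ℕ → ℝ) (h : ∀ n, 0 ≤ mu n) {E : Finset (ℕ × ℕ)} {S T : Finset ℕ}
    (hE : E ⊆ S ×ˢ T) : muEdges mu E ≤ muSet mu S * muSet mu T := by
  simp only [muSet]
  rw [Finset.sum_mul_sum]
  calc muEdges mu E ≤ ∑ e ∈ S ×ˢ T, mu e.1 * mu e.2 :=
        Finset.sum_le_sum_of_subset_of_nonneg hE fun e _ _ => mul_nonneg (h e.1) (h e.2)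
    _ = ∑ a ∈ S, ∑ b ∈ T, mu a * mu b := by rw [Finset.sum_product]

private lemma exactPart_subset (S : Finset ℕ) (p k : ℕ) : exactPart S p k ⊆ S :=
  Finset.filter_subset _ _

private lemma edgesAt_subset (G : GCDGraph) (p k l : ℕ) :
    edgesAt G p k l ⊆ exactPart G.V p k ×ˢ exactPart G.W p l := by
  intro e he
  rw [edgesAt, Finset.mem_filter] at he
  exact Finset.mem_product.mpr ⟨he.2.1, he.2.2⟩

private lemma exactPart_disjoint {k l : ℕ} (hkl : k ≠ l) (p : ℕ) (S : Finset ℕ) :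
    Disjoint (exactPart S p k) (exactPart S p l) := by
  rw [Finset.disjoint_left]
  intro a ha hb
  rw [exactPart, Finset.mem_filter] at ha hb
  rcases Nat.lt_or_ge k l with h | h
  · exact ha.2.2 (dvd_trans (pow_dvd_pow p h) hb.2.1)
  · exact hb.2.2 (dvd_trans (pow_dvd_pow p (Nat.lt_of_le_of_ne h (Ne.symm hkl))) ha.2.1)

private noncomputable def PRod (τ : ℝ) (G : GCDGraph) : ℝ :=
  ∏ q ∈ G.P, ((q : ℝ) ^ (((G.f q : ℤ) - (G.g q : ℤ)).natAbs) *
    ((1 - (if G.f q = G.g q ∧ 1 ≤ G.f q then ((q : ℝ))⁻¹ else 0))⁻¹) ^ 2 *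
    ((1 - (q : ℝ) ^ (-1 - τ / 4))⁻¹) ^ 3)

private lemma quality_eq (τ : ℝ) (G : GCDGraph) :
    quality τ G = densityRaw G.mu G.V G.W G.E ^ (2+τ) * muSet G.mu G.V * muSet G.mu G.W *
      PRod τ G := rfl

private lemma PRod_pos (τ : ℝ) (hτ0 : 0 < τ) (G : GCDGraph) : 0 < PRod τ G := by
  rw [PRod]
  apply Finset.prod_pos
  intro q hq
  have hq2 : (2:ℝ) ≤ (q:ℝ) := by exact_mod_cast (G.P_prime q hq).two_le
  have hq1 : (1:ℝ) < q := by linarith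
  have hq0 : (0:ℝ) < q := by linarith
  have h2 : (0:ℝ) < 1 - (if G.f q = G.g q ∧ 1 ≤ G.f q then ((q:ℝ))⁻¹ else 0) := by
    split_ifs
    · have : (q:ℝ)⁻¹ < 1 := inv_lt_one_of_one_lt₀ hq1
      linarith
    · norm_num
  have h3 : (0:ℝ) < 1 - (q:ℝ) ^ (-1 - τ/4) := by
    have := Real.rpow_lt_one_of_one_lt_of_neg hq1 (by linarith : -1 - τ/4 < 0)
    linarith
  have h1 : (0:ℝ) < (q:ℝ) ^ (((G.f q : ℤ) - (G.g q : ℤ)).natAbs) := pow_pos hq0 _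
  exact mul_pos (mul_pos h1 (pow_pos (inv_pos.mpr h2) 2)) (pow_pos (inv_pos.mpr h3) 3)

private lemma qualityAt_eq (τ : ℝ) (G : GCDGraph) (p k l : ℕ) (hpP : p ∉ G.P) (hkl : k ≠ l) :
    qualityAt τ G p k l =
      densityRaw G.mu (exactPart G.V p k) (exactPart G.W p l) (edgesAt G p k l) ^ (2+τ) *
        muSet G.mu (exactPart G.V p k) * muSet G.mu (exactPart G.W p l) *
        ((p:ℝ) ^ (((k:ℤ) - (l:ℤ)).natAbs) * ((1 - (p:ℝ) ^ (-1 - τ/4))⁻¹) ^ 3 * PRod τ G) := by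
  rw [qualityAt, qualityRaw]
  rw [Finset.prod_insert hpP]
  have h3 : ∏ q ∈ G.P, ((q : ℝ) ^ (((Function.update G.f p k q : ℤ) -
        (Function.update G.g p l q : ℤ)).natAbs) *
      ((1 - (if Function.update G.f p k q = Function.update G.g p l q ∧
          1 ≤ Function.update G.f p k q then ((q : ℝ))⁻¹ else 0))⁻¹) ^ 2 *
      ((1 - (q : ℝ) ^ (-1 - τ / 4))⁻¹) ^ 3) = PRod τ G := by
    rw [PRod]
    refine Finset.prod_congr rfl fun q hq => ?_
    have hqp : q ≠ p := fun h => hpP (h ▸ hq)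
    rw [Function.update_of_ne hqp, Function.update_of_ne hqp]
  rw [h3]
  rw [Function.update_self, Function.update_self]
  rw [if_neg (fun hc : k = l ∧ 1 ≤ k => hkl hc.1)]
  norm_num
  try ring

private lemma real_root (τ x y : ℝ) (hτ0 : 0 < τ) (hx : 0 ≤ x) (hy : 0 ≤ y)
    (h : x ^ ((2:ℝ)+τ) ≤ y) : x ≤ y ^ (1/(2+τ)) := by
  have ht : (0:ℝ) < 2+τ := by linarith
  have h2 := Real.rpow_le_rpow (Real.rpow_nonneg hx _) h (le_of_lt (by positivity : (0:ℝ) < 1/(2+τ)))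
  rwa [← Real.rpow_mul hx, mul_one_div_cancel (ne_of_gt ht), Real.rpow_one] at h2

private lemma real_step (τ M μV μW μVk μWl μEkl μE pj c2p : ℝ)
    (hτ0 : 0 < τ) (hμV0 : 0 ≤ μV) (hμW0 : 0 ≤ μW) (hμVk0 : 0 ≤ μVk) (hμWl0 : 0 ≤ μWl)
    (hμEkl0 : 0 ≤ μEkl) (hVW : 0 < μV * μW) (hpj : 0 < pj) (hM0 : 0 ≤ M) (hμE0 : 0 ≤ μE)
    (hVk : μVk ≤ μV) (hWl : μWl ≤ c2p * μW) (hc2p : 0 ≤ c2p) (hEkl : μEkl ≤ μVk * μWl)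
    (hq : (μEkl / (μVk * μWl)) ^ ((2:ℝ)+τ) * μVk * μWl * pj ≤
      M * ((μE / (μV * μW)) ^ ((2:ℝ)+τ) * μV * μW)) :
    μEkl ^ ((2:ℝ)+τ) * pj ≤ M * c2p ^ ((1:ℝ)+τ) * μE ^ ((2:ℝ)+τ) := by
  have ht1 : (0:ℝ) < 1 + τ := by linarith
  have ht2 : (0:ℝ) < 2 + τ := by linarith
  have hμVpos : 0 < μV := by
    rcases mul_pos_iff.mp hVW with ⟨h, _⟩ | ⟨h, h'⟩
    · exact h
    · linarith
  have hμWpos : 0 < μW := by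
    rcases mul_pos_iff.mp hVW with ⟨_, h⟩ | ⟨h, h'⟩
    · exact h
    · linarith
  rcases eq_or_lt_of_le (mul_nonneg hμVk0 hμWl0) with hzero | hpos
  · have hE0 : μEkl = 0 := le_antisymm (hzero ▸ hEkl) hμEkl0
    rw [hE0, Real.zero_rpow (ne_of_gt ht2), zero_mul]
    have h1 : 0 ≤ c2p ^ ((1:ℝ)+τ) := Real.rpow_nonneg hc2p _
    have h2 : 0 ≤ μE ^ ((2:ℝ)+τ) := Real.rpow_nonneg hμE0 _
    positivity
  · have hVkpos : 0 < μVk := by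
      rcases mul_pos_iff.mp hpos with ⟨h, _⟩ | ⟨h, h'⟩
      · exact h
      · linarith
    have hWlpos : 0 < μWl := by
      rcases mul_pos_iff.mp hpos with ⟨_, h⟩ | ⟨h, h'⟩
      · exact h
      · linarith
    have hb1 : (0:ℝ) < (μVk*μWl) ^ ((1:ℝ)+τ) := Real.rpow_pos_of_pos hpos _
    have hkey : μEkl ^ ((2:ℝ)+τ) * pj =
        ((μEkl / (μVk * μWl)) ^ ((2:ℝ)+τ) * μVk * μWl * pj) * (μVk * μWl) ^ ((1:ℝ)+τ) := by
      rw [Real.div_rpow hμEkl0 (le_of_lt hpos)]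
      rw [show (2:ℝ)+τ = 1 + (1+τ) from by ring]
      rw [Real.rpow_add hpos, Real.rpow_one]
      field_simp
    rw [hkey]
    calc ((μEkl / (μVk * μWl)) ^ ((2:ℝ)+τ) * μVk * μWl * pj) * (μVk * μWl) ^ ((1:ℝ)+τ)
        ≤ (M * ((μE / (μV * μW)) ^ ((2:ℝ)+τ) * μV * μW)) * (μVk * μWl) ^ ((1:ℝ)+τ) :=
          mul_le_mul_of_nonneg_right hq (le_of_lt hb1)
      _ ≤ (M * ((μE / (μV * μW)) ^ ((2:ℝ)+τ) * μV * μW)) * ((μV * (c2p * μW)) ^ ((1:ℝ)+τ)) := by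
          apply mul_le_mul_of_nonneg_left
          · exact Real.rpow_le_rpow (le_of_lt hpos)
              (mul_le_mul hVk hWl hμWl0 hμV0) (le_of_lt ht1)
          · have h0 : 0 ≤ (μE / (μV * μW)) ^ ((2:ℝ)+τ) :=
              Real.rpow_nonneg (div_nonneg hμE0 (le_of_lt hVW)) _
            positivity
      _ = M * c2p ^ ((1:ℝ)+τ) * μE ^ ((2:ℝ)+τ) := by
          rw [show μV * (c2p * μW) = (μV * μW) * c2p from by ring]
          rw [Real.mul_rpow (le_of_lt hVW) hc2p]
          rw [Real.div_rpow hμE0 (le_of_lt hVW)]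
          rw [show (2:ℝ)+τ = 1 + (1+τ) from by ring]
          rw [Real.rpow_add hVW, Real.rpow_one]
          have hb2 : (0:ℝ) < (μV*μW) ^ ((1:ℝ)+τ) := Real.rpow_pos_of_pos hVW _
          field_simp

private lemma real_split (τ M C μE : ℝ) (p j : ℕ) (hτ0 : 0 < τ) (hM0 : 0 ≤ M) (hC0 : 0 ≤ C)
    (hμE0 : 0 ≤ μE) (hp0 : 0 < (p:ℝ)) :
    (M * C ^ ((1:ℝ)+τ) * μE ^ ((2:ℝ)+τ) / (p:ℝ) ^ j) ^ (1/(2+τ)) =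
      μE * (M ^ (1/(2+τ)) * (C ^ ((1:ℝ)+τ)) ^ (1/(2+τ))) * ((p:ℝ) ^ (-(1/(2+τ)))) ^ j := by
  have ht : (0:ℝ) < 2+τ := by linarith
  have hCp : 0 ≤ C ^ ((1:ℝ)+τ) := Real.rpow_nonneg hC0 _
  have hE : 0 ≤ μE ^ ((2:ℝ)+τ) := Real.rpow_nonneg hμE0 _
  rw [Real.div_rpow (by positivity) (by positivity)]
  rw [Real.mul_rpow (mul_nonneg hM0 hCp) hE, Real.mul_rpow hM0 hCp]
  rw [← Real.rpow_natCast (p:ℝ) j, ← Real.rpow_mul (le_of_lt hp0)]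
  rw [← Real.rpow_natCast ((p:ℝ) ^ (-(1/(2+τ)))) j, ← Real.rpow_mul (le_of_lt hp0)]
  rw [show (μE ^ ((2:ℝ)+τ)) ^ (1/(2+τ)) = μE from by
    rw [← Real.rpow_mul hμE0, mul_one_div_cancel (ne_of_gt ht), Real.rpow_one]]
  rw [div_eq_mul_inv, ← Real.rpow_neg (le_of_lt hp0)]
  rw [show -((j:ℝ) * (1/(2+τ))) = -(1/(2+τ)) * (j:ℝ) from by ring]
  ring

set_option maxHeartbeats 1000000 in
private lemma edge_bound (τ M : ℝ) (hτ0 : 0 < τ) (hM0 : 0 ≤ M)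
    (G : GCDGraph) (p : ℕ) (hpprime : p.Prime) (hpP : p ∉ G.P)
    (hVW : 0 < muSet G.mu G.V * muSet G.mu G.W)
    (k l : ℕ) (hkl : k ≠ l)
    (hWl : muSet G.mu (exactPart G.W p l) ≤ C2 τ M / (p:ℝ) * muSet G.mu G.W)
    (hq : qualityAt τ G p k l ≤ M * quality τ G) :
    muEdges G.mu (edgesAt G p k l) ≤
      muEdges G.mu G.E * (M ^ (1/(2+τ)) * ((C2 τ M / (p:ℝ)) ^ ((1:ℝ)+τ)) ^ (1/(2+τ))) *
        ((p:ℝ) ^ (-(1/(2+τ)))) ^ (((l:ℤ) - (k:ℤ)).natAbs) := by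
  have hμ := G.mu_nonneg
  have hp2 : (2:ℝ) ≤ p := by exact_mod_cast hpprime.two_le
  have hp0 : (0:ℝ) < p := by linarith
  have ht : (0:ℝ) < 2 + τ := by linarith
  have hμE0 : 0 ≤ muEdges G.mu G.E := muEdges_nonneg _ hμ _
  have hC1 : 0 < C1 τ := by rw [C1]; positivity
  have hC2 : 0 ≤ C2 τ M := by rw [C2]; positivity
  have hC2p0 : 0 ≤ C2 τ M / (p:ℝ) := div_nonneg hC2 (le_of_lt hp0)
  rw [qualityAt_eq τ G p k l hpP hkl, quality_eq] at hq
  rw [show (((k:ℤ) - (l:ℤ)).natAbs) = (((l:ℤ) - (k:ℤ)).natAbs) from by omega] at hq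
  simp only [densityRaw] at hq
  have hPR := PRod_pos τ hτ0 G
  have hc3 : (1:ℝ) ≤ ((1 - (p:ℝ) ^ (-1 - τ/4))⁻¹) ^ 3 := by
    have h1 : (p:ℝ) ^ (-1 - τ/4) < 1 :=
      Real.rpow_lt_one_of_one_lt_of_neg (by linarith) (by linarith)
    have h2 : 0 ≤ (p:ℝ) ^ (-1 - τ/4) := Real.rpow_nonneg (le_of_lt hp0) _
    have h3 : (1:ℝ) ≤ (1 - (p:ℝ) ^ (-1 - τ/4))⁻¹ := (one_le_inv₀ (by linarith)).mpr (by linarith)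
    exact one_le_pow₀ h3
  have hμVk0 : 0 ≤ muSet G.mu (exactPart G.V p k) := muSet_nonneg _ hμ _
  have hμWl0 : 0 ≤ muSet G.mu (exactPart G.W p l) := muSet_nonneg _ hμ _
  have hμEkl0 : 0 ≤ muEdges G.mu (edgesAt G p k l) := muEdges_nonneg _ hμ _
  have hVkV : muSet G.mu (exactPart G.V p k) ≤ muSet G.mu G.V :=
    muSet_mono _ hμ (exactPart_subset _ _ _)
  have hEkl : muEdges G.mu (edgesAt G p k l) ≤
      muSet G.mu (exactPart G.V p k) * muSet G.mu (exactPart G.W p l) :=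
    muEdges_le _ hμ (edgesAt_subset G p k l)
  have hμV0 : 0 ≤ muSet G.mu G.V := muSet_nonneg _ hμ _
  have hμW0 : 0 ≤ muSet G.mu G.W := muSet_nonneg _ hμ _
  set j := (((l:ℤ) - (k:ℤ)).natAbs) with hj_def
  have hpj : (0:ℝ) < (p:ℝ) ^ j := pow_pos hp0 j
  have hX0 : 0 ≤ (muEdges G.mu (edgesAt G p k l) /
      (muSet G.mu (exactPart G.V p k) * muSet G.mu (exactPart G.W p l))) ^ ((2:ℝ)+τ) *
      muSet G.mu (exactPart G.V p k) * muSet G.mu (exactPart G.W p l) * (p:ℝ) ^ j :=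
    mul_nonneg (mul_nonneg (mul_nonneg
      (Real.rpow_nonneg (div_nonneg hμEkl0 (mul_nonneg hμVk0 hμWl0)) _) hμVk0) hμWl0)
      (le_of_lt hpj)
  have hq2 : ((muEdges G.mu (edgesAt G p k l) /
        (muSet G.mu (exactPart G.V p k) * muSet G.mu (exactPart G.W p l))) ^ ((2:ℝ)+τ) *
        muSet G.mu (exactPart G.V p k) * muSet G.mu (exactPart G.W p l) * (p:ℝ) ^ j *
        ((1 - (p:ℝ) ^ (-1 - τ/4))⁻¹) ^ 3) * PRod τ G ≤
      (M * ((muEdges G.mu G.E / (muSet G.mu G.V * muSet G.mu G.W)) ^ ((2:ℝ)+τ) *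
        muSet G.mu G.V * muSet G.mu G.W)) * PRod τ G := by
    calc ((muEdges G.mu (edgesAt G p k l) /
          (muSet G.mu (exactPart G.V p k) * muSet G.mu (exactPart G.W p l))) ^ ((2:ℝ)+τ) *
          muSet G.mu (exactPart G.V p k) * muSet G.mu (exactPart G.W p l) * (p:ℝ) ^ j *
          ((1 - (p:ℝ) ^ (-1 - τ/4))⁻¹) ^ 3) * PRod τ G
        = (muEdges G.mu (edgesAt G p k l) /
          (muSet G.mu (exactPart G.V p k) * muSet G.mu (exactPart G.W p l))) ^ ((2:ℝ)+τ) *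
          muSet G.mu (exactPart G.V p k) * muSet G.mu (exactPart G.W p l) *
          ((p:ℝ) ^ j * ((1 - (p:ℝ) ^ (-1 - τ/4))⁻¹) ^ 3 * PRod τ G) := by ring
      _ ≤ M * ((muEdges G.mu G.E / (muSet G.mu G.V * muSet G.mu G.W)) ^ ((2:ℝ)+τ) *
          muSet G.mu G.V * muSet G.mu G.W * PRod τ G) := hq
      _ = (M * ((muEdges G.mu G.E / (muSet G.mu G.V * muSet G.mu G.W)) ^ ((2:ℝ)+τ) *
          muSet G.mu G.V * muSet G.mu G.W)) * PRod τ G := by ring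
  have hq3 := le_of_mul_le_mul_right hq2 hPR
  have hq4 : (muEdges G.mu (edgesAt G p k l) /
        (muSet G.mu (exactPart G.V p k) * muSet G.mu (exactPart G.W p l))) ^ ((2:ℝ)+τ) *
        muSet G.mu (exactPart G.V p k) * muSet G.mu (exactPart G.W p l) * (p:ℝ) ^ j ≤
      M * ((muEdges G.mu G.E / (muSet G.mu G.V * muSet G.mu G.W)) ^ ((2:ℝ)+τ) *
        muSet G.mu G.V * muSet G.mu G.W) :=
    le_trans (le_mul_of_one_le_right hX0 hc3) hq3
  have hstep := real_step τ M (muSet G.mu G.V) (muSet G.mu G.W)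
    (muSet G.mu (exactPart G.V p k)) (muSet G.mu (exactPart G.W p l))
    (muEdges G.mu (edgesAt G p k l)) (muEdges G.mu G.E) ((p:ℝ) ^ j) (C2 τ M / (p:ℝ))
    hτ0 hμV0 hμW0 hμVk0 hμWl0 hμEkl0 hVW hpj hM0 hμE0 hVkV hWl hC2p0 hEkl hq4
  have h1 : muEdges G.mu (edgesAt G p k l) ^ ((2:ℝ)+τ) ≤
      M * (C2 τ M / (p:ℝ)) ^ ((1:ℝ)+τ) * muEdges G.mu G.E ^ ((2:ℝ)+τ) / (p:ℝ) ^ j :=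
    (le_div_iff₀ hpj).mpr hstep
  have hy0 : 0 ≤ M * (C2 τ M / (p:ℝ)) ^ ((1:ℝ)+τ) * muEdges G.mu G.E ^ ((2:ℝ)+τ) / (p:ℝ) ^ j :=
    div_nonneg (mul_nonneg (mul_nonneg hM0 (Real.rpow_nonneg hC2p0 _))
      (Real.rpow_nonneg hμE0 _)) (le_of_lt hpj)
  have h2 := real_root τ (muEdges G.mu (edgesAt G p k l)) _ hτ0 hμEkl0 hy0 h1
  rwa [real_split τ M (C2 τ M / (p:ℝ)) (muEdges G.mu G.E) p j hτ0 hM0 hC2p0 hμE0 hp0] at h2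

private lemma geom_tail_sum (Q : ℝ) (hQ0 : 0 ≤ Q) (hQ : Q ≤ 4/5) (k r : ℕ) (s : Finset ℕ) :
    ∑ l ∈ s, ((if l + (r+1) ≤ k then Q ^ (k - (r+1) - l) else 0) +
      (if k + (r+1) ≤ l then Q ^ (l - (k + (r+1))) else 0)) ≤ 10 := by
  classical
  have hQ1 : Q < 1 := lt_of_le_of_lt hQ (by norm_num)
  have hgeo : ∀ u : Finset ℕ, ∑ i ∈ u, Q ^ i ≤ 5 := by
    intro u
    calc ∑ i ∈ u, Q ^ i ≤ (1 - Q)⁻¹ := by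
          rw [← tsum_geometric_of_lt_one hQ0 hQ1]
          exact Summable.sum_le_tsum u (fun i _ => pow_nonneg hQ0 i) (summable_geometric_of_lt_one hQ0 hQ1)
      _ ≤ 5 := by
          rw [inv_le_comm₀ (by linarith) (by norm_num)]
          linarith
  rw [Finset.sum_add_distrib]
  have h1 : ∑ l ∈ s, (if l + (r+1) ≤ k then Q ^ (k - (r+1) - l) else 0) ≤ 5 := by
    rw [← Finset.sum_filter]
    have hinj : ∀ x ∈ s.filter (fun l => l + (r+1) ≤ k), ∀ y ∈ s.filter (fun l => l + (r+1) ≤ k),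
        k - (r+1) - x = k - (r+1) - y → x = y := by
      intro x hx y hy hxy
      simp only [Finset.mem_filter] at hx hy
      omega
    calc ∑ l ∈ s.filter (fun l => l + (r+1) ≤ k), Q ^ (k - (r+1) - l)
        = ∑ i ∈ (s.filter (fun l => l + (r+1) ≤ k)).image (fun l => k - (r+1) - l), Q ^ i :=
          (Finset.sum_image hinj).symm
      _ ≤ 5 := hgeo _
  have h2 : ∑ l ∈ s, (if k + (r+1) ≤ l then Q ^ (l - (k + (r+1))) else 0) ≤ 5 := by
    rw [← Finset.sum_filter]
    have hinj : ∀ x ∈ s.filter (fun l => k + (r+1) ≤ l), ∀ y ∈ s.filter (fun l => k + (r+1) ≤ l),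
        x - (k + (r+1)) = y - (k + (r+1)) → x = y := by
      intro x hx y hy hxy
      simp only [Finset.mem_filter] at hx hy
      omega
    calc ∑ l ∈ s.filter (fun l => k + (r+1) ≤ l), Q ^ (l - (k + (r+1)))
        = ∑ i ∈ (s.filter (fun l => k + (r+1) ≤ l)).image (fun l => l - (k + (r+1))), Q ^ i :=
          (Finset.sum_image hinj).symm
      _ ≤ 5 := hgeo _
  linarith

set_option maxHeartbeats 1000000 in
private lemma numeric_bound (τ M : ℝ) (hτ0 : 0 < τ) (hτ1 : τ < 1/100) (hM : 2 ≤ M)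
    (p r : ℕ) (hp2 : (2:ℝ) ≤ p) (hr : 1 ≤ r) (hpr : C4 τ M < (p:ℝ) ^ r) :
    M ^ (1/(2+τ)) * ((C2 τ M / (p:ℝ)) ^ ((1:ℝ)+τ)) ^ (1/(2+τ)) * ((p:ℝ) ^ (-(1/(2+τ)))) ^ (r+1) * 10 ≤
      1 / (4 * (p:ℝ) ^ ((1:ℝ) + τ/4)) := by
  have hp0 : (0:ℝ) < p := by linarith
  have hp1 : (1:ℝ) < p := by linarith
  have hM0 : (0:ℝ) ≤ M := by linarith
  have hM1 : (1:ℝ) ≤ M := by linarith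
  set t := 2 + τ with ht_def
  have htpos : (0:ℝ) < t := by rw [ht_def]; linarith
  have htne : t ≠ 0 := ne_of_gt htpos
  have hts : t ≤ 201/100 := by rw [ht_def]; linarith
  have ht2 : (2:ℝ) ≤ t := by rw [ht_def]; linarith
  have hC1 : (1:ℝ) ≤ C1 τ := by
    rw [C1, le_div_iff₀ hτ0]; nlinarith
  have hC2 : (1:ℝ) ≤ C2 τ M := by
    have h3 : (1:ℝ) ≤ C1 τ ^ 3 := one_le_pow₀ hC1
    rw [C2]; nlinarith
  have hC20 : (0:ℝ) < C2 τ M := by linarith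
  have hC40 : (0:ℝ) < C4 τ M := by
    rw [C4]
    have : (0:ℝ) < M := by linarith
    positivity
  -- 1/t bounds
  have h1t : (100:ℝ)/201 ≤ 1/t := by
    have := one_div_le_one_div_of_le htpos hts
    norm_num at this ⊢
    linarith
  have h1t' : 1/t ≤ 1/2 := by
    have := one_div_le_one_div_of_le (by norm_num : (0:ℝ) < 2) ht2
    linarith
  set e := 1/t - τ/4 with he_def
  have he0 : (0:ℝ) ≤ e := by rw [he_def]; linarith
  have h2e : 1/t ≤ 2*e := by rw [he_def]; linarith
  have h3e : (1+τ)/t ≤ 2*e := by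
    rw [he_def]
    have hexp : (1+τ)/t = 1/t + τ * (1/t) := by field_simp
    have hτt : τ * (1/t) ≤ τ * (1/2) := by nlinarith
    rw [hexp]; linarith
  have h10e : (2:ℝ) ≤ 10*e := by rw [he_def]; linarith
  -- rewrite powers of p
  have hQ : ((p:ℝ) ^ (-(1/t))) ^ (r+1) = (p:ℝ) ^ (-(((r:ℝ)+1)/t)) := by
    rw [← Real.rpow_natCast ((p:ℝ) ^ (-(1/t))) (r+1), ← Real.rpow_mul (le_of_lt hp0)]
    congr 1
    push_cast
    try ring
  have hC2p : ((C2 τ M / (p:ℝ)) ^ ((1:ℝ)+τ)) ^ (1/t) =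
      C2 τ M ^ ((1+τ)/t) * (p:ℝ) ^ (-((1+τ)/t)) := by
    rw [← Real.rpow_mul (by positivity : (0:ℝ) ≤ C2 τ M / p)]
    rw [show ((1:ℝ)+τ) * (1/t) = (1+τ)/t from by ring]
    rw [Real.div_rpow (le_of_lt hC20) (le_of_lt hp0)]
    rw [Real.rpow_neg (le_of_lt hp0), div_eq_mul_inv]
  rw [hQ, hC2p, le_div_iff₀ (by positivity : (0:ℝ) < 4 * (p:ℝ) ^ ((1:ℝ) + τ/4))]
  have hcomb : (p:ℝ) ^ (-((1+τ)/t)) * (p:ℝ) ^ (-(((r:ℝ)+1)/t)) * (p:ℝ) ^ ((1:ℝ) + τ/4) =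
      ((p:ℝ) ^ ((r:ℝ)/t - τ/4))⁻¹ := by
    rw [← Real.rpow_add hp0, ← Real.rpow_add hp0, ← Real.rpow_neg (le_of_lt hp0)]
    congr 1
    field_simp
    ring
  have hrpos : (0:ℝ) < (p:ℝ) ^ ((r:ℝ)/t - τ/4) := Real.rpow_pos_of_pos hp0 _
  have key : 40 * (M ^ (1/t) * C2 τ M ^ ((1+τ)/t)) ≤ (p:ℝ) ^ ((r:ℝ)/t - τ/4) := by
    have h40 : (40:ℝ) ≤ (10:ℝ) ^ ((10:ℝ)*e) := by
      have h100 : (10:ℝ) ^ (2:ℝ) = 100 := by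
        rw [show (2:ℝ) = ((2:ℕ):ℝ) from by norm_num, Real.rpow_natCast]
        norm_num
      have := Real.rpow_le_rpow_of_exponent_le (by norm_num : (1:ℝ) ≤ 10) h10e
      rw [h100] at this
      linarith
    have hMe : M ^ (1/t) ≤ M ^ (2*e) := Real.rpow_le_rpow_of_exponent_le hM1 h2e
    have hC2e : C2 τ M ^ ((1+τ)/t) ≤ C2 τ M ^ (2*e) := Real.rpow_le_rpow_of_exponent_le hC2 h3e
    have hr1 : (1:ℝ) ≤ (r:ℝ) := by exact_mod_cast hr
    calc 40 * (M ^ (1/t) * C2 τ M ^ ((1+τ)/t))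
        ≤ (10:ℝ) ^ ((10:ℝ)*e) * (M ^ (2*e) * C2 τ M ^ (2*e)) := by
          apply mul_le_mul h40 (mul_le_mul hMe hC2e (Real.rpow_nonneg (by linarith) _)
            (Real.rpow_nonneg hM0 _))
            (mul_nonneg (Real.rpow_nonneg hM0 _) (Real.rpow_nonneg (by linarith) _))
            (Real.rpow_nonneg (by norm_num) _)
      _ = C4 τ M ^ e := by
          rw [C4]
          rw [Real.mul_rpow (by positivity) (by positivity : (0:ℝ) ≤ C2 τ M ^ 2)]
          rw [Real.mul_rpow (by norm_num : (0:ℝ) ≤ (10:ℝ)^(10:ℕ)) (by positivity : (0:ℝ) ≤ M ^ 2)]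
          rw [← Real.rpow_natCast (10:ℝ) 10, ← Real.rpow_mul (by norm_num : (0:ℝ) ≤ 10)]
          rw [← Real.rpow_natCast M 2, ← Real.rpow_mul hM0]
          rw [← Real.rpow_natCast (C2 τ M) 2, ← Real.rpow_mul (by linarith : (0:ℝ) ≤ C2 τ M)]
          norm_num
          ring
      _ ≤ ((p:ℝ) ^ r) ^ e := Real.rpow_le_rpow (le_of_lt hC40) (le_of_lt hpr) he0
      _ = (p:ℝ) ^ ((r:ℝ)*e) := by
          rw [← Real.rpow_natCast (p:ℝ) r, ← Real.rpow_mul (le_of_lt hp0)]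
      _ ≤ (p:ℝ) ^ ((r:ℝ)/t - τ/4) := by
          apply Real.rpow_le_rpow_of_exponent_le (by linarith)
          rw [he_def]
          have : (r:ℝ)/t = (r:ℝ) * (1/t) := by ring
          rw [this]
          nlinarith [mul_nonneg (sub_nonneg.mpr hr1) (le_of_lt hτ0)]
  calc M ^ (1/t) * (C2 τ M ^ ((1+τ)/t) * (p:ℝ) ^ (-((1+τ)/t))) * (p:ℝ) ^ (-(((r:ℝ)+1)/t)) * 10 *
        (4 * (p:ℝ) ^ ((1:ℝ) + τ/4))
      = (40 * (M ^ (1/t) * C2 τ M ^ ((1+τ)/t))) *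
        ((p:ℝ) ^ (-((1+τ)/t)) * (p:ℝ) ^ (-(((r:ℝ)+1)/t)) * (p:ℝ) ^ ((1:ℝ) + τ/4)) := by ring
    _ = (40 * (M ^ (1/t) * C2 τ M ^ ((1+τ)/t))) * ((p:ℝ) ^ ((r:ℝ)/t - τ/4))⁻¹ := by rw [hcomb]
    _ ≤ (p:ℝ) ^ ((r:ℝ)/t - τ/4) * ((p:ℝ) ^ ((r:ℝ)/t - τ/4))⁻¹ :=
        mul_le_mul_of_nonneg_right key (inv_nonneg.mpr (le_of_lt hrpos))
    _ = 1 := mul_inv_cancel₀ (ne_of_gt hrpos)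


set_option maxHeartbeats 1600000 in
/-- Few edges between unbalanced sets (`UnbalancedSetEdges1`). -/
theorem few_edges_unbalanced (τ M : ℝ) (hτ : τ ∈ Set.Ioo (0 : ℝ) (1 / 100)) (hM : 2 ≤ M)
    (G : GCDGraph) (hδ : 0 < G.density)
    (p : ℕ) (hp : p ∈ R G) (r : ℕ) (hr : 1 ≤ r) (k : ℕ)
    (hpr : C4 τ M < (p : ℝ) ^ r)
    (hWk : 1 - C2 τ M / (p : ℝ) ≤ muSet G.mu (exactPart G.W p k) / muSet G.mu G.W) :
    (∃ l : ℕ, r + 1 ≤ ((l : ℤ) - (k : ℤ)).natAbs ∧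
        M * quality τ G < qualityAt τ G p k l) ∨
    (∑' l : ℕ, (if r + 1 ≤ ((l : ℤ) - (k : ℤ)).natAbs
        then muEdges G.mu (edgesAt G p k l) else 0)) ≤
      muEdges G.mu G.E / (4 * (p : ℝ) ^ ((1 : ℝ) + τ / 4)) := by
  classical
  by_cases hex : ∃ l : ℕ, r + 1 ≤ ((l : ℤ) - (k : ℤ)).natAbs ∧
      M * quality τ G < qualityAt τ G p k l
  · exact Or.inl hex
  push_neg at hex
  right
  obtain ⟨hτ0, hτ1⟩ := hτ
  obtain ⟨hpprime, hpP, -⟩ := hp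
  have hμ := G.mu_nonneg
  have hM0 : (0:ℝ) ≤ M := by linarith
  have hp2 : (2:ℝ) ≤ p := by exact_mod_cast hpprime.two_le
  have hp0 : (0:ℝ) < p := by linarith
  have hμE0 : 0 ≤ muEdges G.mu G.E := muEdges_nonneg _ hμ _
  have hVW : 0 < muSet G.mu G.V * muSet G.mu G.W := by
    by_contra hcon
    push_neg at hcon
    have h0 : muSet G.mu G.V * muSet G.mu G.W = 0 :=
      le_antisymm hcon (mul_nonneg (muSet_nonneg _ hμ _) (muSet_nonneg _ hμ _))
    have hz : G.density = 0 := by rw [GCDGraph.density, densityRaw, h0, div_zero]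
    rw [hz] at hδ
    exact lt_irrefl 0 hδ
  have hμW : 0 < muSet G.mu G.W := by
    rcases mul_pos_iff.mp hVW with ⟨_, h⟩ | ⟨h, _⟩
    · exact h
    · linarith [muSet_nonneg G.mu hμ G.V]
  -- bound on μ(W_l) for l ≠ k
  have hWl : ∀ l : ℕ, l ≠ k →
      muSet G.mu (exactPart G.W p l) ≤ C2 τ M / (p:ℝ) * muSet G.mu G.W := by
    intro l hlk
    have hdisj : Disjoint (exactPart G.W p k) (exactPart G.W p l) :=
      exactPart_disjoint (Ne.symm hlk) p G.W
    have hsum : muSet G.mu (exactPart G.W p k) + muSet G.mu (exactPart G.W p l) ≤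
        muSet G.mu G.W := by
      simp only [muSet]
      rw [← Finset.sum_union hdisj]
      exact Finset.sum_le_sum_of_subset_of_nonneg
        (Finset.union_subset (exactPart_subset _ _ _) (exactPart_subset _ _ _))
        (fun n _ _ => hμ n)
    have hWkge : (1 - C2 τ M / (p:ℝ)) * muSet G.mu G.W ≤ muSet G.mu (exactPart G.W p k) := by
      rw [← le_div_iff₀ hμW]
      exact hWk
    rw [sub_mul, one_mul] at hWkge
    linarith
  -- nonnegativity facts about Q and D
  have hQ0 : (0:ℝ) ≤ (p:ℝ) ^ (-(1/(2+τ))) := Real.rpow_nonneg (le_of_lt hp0) _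
  have hQ45 : (p:ℝ) ^ (-(1/(2+τ))) ≤ 4/5 := by
    have h1 : (p:ℝ) ^ (-(1/(2+τ))) ≤ (p:ℝ) ^ (-(1/3) : ℝ) := by
      apply Real.rpow_le_rpow_of_exponent_le (by linarith)
      have h3 : 1/3 ≤ 1/(2+τ) := by
        have := one_div_le_one_div_of_le (by linarith : (0:ℝ) < 2+τ) (by linarith : 2+τ ≤ 3)
        linarith
      linarith
    have h2 : (p:ℝ) ^ (-(1/3):ℝ) ≤ (2:ℝ) ^ (-(1/3):ℝ) := by
      rw [Real.rpow_neg (le_of_lt hp0), Real.rpow_neg (by norm_num : (0:ℝ) ≤ 2)]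
      apply inv_anti₀ (Real.rpow_pos_of_pos (by norm_num) _)
      exact Real.rpow_le_rpow (by norm_num) hp2 (by norm_num)
    have h3 : (2:ℝ) ^ (-(1/3):ℝ) ≤ 4/5 := by
      have hc : ((2:ℝ) ^ (-(1/3):ℝ)) ^ (3:ℕ) = 1/2 := by
        rw [← Real.rpow_natCast ((2:ℝ) ^ (-(1/3):ℝ)) 3, ← Real.rpow_mul (by norm_num : (0:ℝ) ≤ 2)]
        norm_num
      apply le_of_pow_le_pow_left₀ (by norm_num : (3:ℕ) ≠ 0) (by norm_num)
      rw [hc]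
      norm_num
    linarith
  have hD0 : (0:ℝ) ≤ M ^ (1/(2+τ)) * ((C2 τ M / (p:ℝ)) ^ ((1:ℝ)+τ)) ^ (1/(2+τ)) := by
    apply mul_nonneg (Real.rpow_nonneg hM0 _) (Real.rpow_nonneg (Real.rpow_nonneg ?_ _) _)
    have hC1 : 0 < C1 τ := by rw [C1]; positivity
    have hC2' : 0 ≤ C2 τ M := by rw [C2]; positivity
    exact div_nonneg hC2' (le_of_lt hp0)
  have hA0 : (0:ℝ) ≤ muEdges G.mu G.E *
      (M ^ (1/(2+τ)) * ((C2 τ M / (p:ℝ)) ^ ((1:ℝ)+τ)) ^ (1/(2+τ))) *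
      ((p:ℝ) ^ (-(1/(2+τ)))) ^ (r+1) :=
    mul_nonneg (mul_nonneg hμE0 hD0) (pow_nonneg hQ0 _)
  apply tsum_le_of_sum_le'
  · exact div_nonneg hμE0 (by positivity)
  intro u
  have hterm : ∀ l ∈ u,
      (if r + 1 ≤ ((l : ℤ) - (k : ℤ)).natAbs then muEdges G.mu (edgesAt G p k l) else 0) ≤
      (muEdges G.mu G.E * (M ^ (1/(2+τ)) * ((C2 τ M / (p:ℝ)) ^ ((1:ℝ)+τ)) ^ (1/(2+τ))) *
        ((p:ℝ) ^ (-(1/(2+τ)))) ^ (r+1)) *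
      ((if l + (r+1) ≤ k then ((p:ℝ) ^ (-(1/(2+τ)))) ^ (k - (r+1) - l) else 0) +
       (if k + (r+1) ≤ l then ((p:ℝ) ^ (-(1/(2+τ)))) ^ (l - (k + (r+1))) else 0)) := by
    intro l _
    by_cases hL : r + 1 ≤ ((l : ℤ) - (k : ℤ)).natAbs
    · rw [if_pos hL]
      have hkl : k ≠ l := by omega
      have hb := edge_bound τ M hτ0 hM0 G p hpprime hpP hVW k l hkl
        (hWl l (Ne.symm hkl)) (hex l hL)
      rcases (by omega : l + (r+1) ≤ k ∨ k + (r+1) ≤ l) with hc | hc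
      · rw [if_pos hc, if_neg (by omega), add_zero]
        have hj : (((l:ℤ) - (k:ℤ)).natAbs) = (r+1) + (k - (r+1) - l) := by omega
        calc muEdges G.mu (edgesAt G p k l) ≤
            muEdges G.mu G.E * (M ^ (1/(2+τ)) * ((C2 τ M / (p:ℝ)) ^ ((1:ℝ)+τ)) ^ (1/(2+τ))) *
              ((p:ℝ) ^ (-(1/(2+τ)))) ^ (((l:ℤ) - (k:ℤ)).natAbs) := hb
          _ = muEdges G.mu G.E * (M ^ (1/(2+τ)) * ((C2 τ M / (p:ℝ)) ^ ((1:ℝ)+τ)) ^ (1/(2+τ))) *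
              ((p:ℝ) ^ (-(1/(2+τ)))) ^ (r+1) * ((p:ℝ) ^ (-(1/(2+τ)))) ^ (k - (r+1) - l) := by
            rw [hj, pow_add]
            ring
      · rw [if_neg (by omega), if_pos hc, zero_add]
        have hj : (((l:ℤ) - (k:ℤ)).natAbs) = (r+1) + (l - (k + (r+1))) := by omega
        calc muEdges G.mu (edgesAt G p k l) ≤
            muEdges G.mu G.E * (M ^ (1/(2+τ)) * ((C2 τ M / (p:ℝ)) ^ ((1:ℝ)+τ)) ^ (1/(2+τ))) *
              ((p:ℝ) ^ (-(1/(2+τ)))) ^ (((l:ℤ) - (k:ℤ)).natAbs) := hb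
          _ = muEdges G.mu G.E * (M ^ (1/(2+τ)) * ((C2 τ M / (p:ℝ)) ^ ((1:ℝ)+τ)) ^ (1/(2+τ))) *
              ((p:ℝ) ^ (-(1/(2+τ)))) ^ (r+1) * ((p:ℝ) ^ (-(1/(2+τ)))) ^ (l - (k + (r+1))) := by
            rw [hj, pow_add]
            ring
    · rw [if_neg hL]
      apply mul_nonneg hA0
      apply add_nonneg
      · split_ifs
        · exact pow_nonneg hQ0 _
        · exact le_refl 0
      · split_ifs
        · exact pow_nonneg hQ0 _
        · exact le_refl 0
  calc ∑ l ∈ u, (if r + 1 ≤ ((l : ℤ) - (k : ℤ)).natAbs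
          then muEdges G.mu (edgesAt G p k l) else 0)
      ≤ ∑ l ∈ u, ((muEdges G.mu G.E *
          (M ^ (1/(2+τ)) * ((C2 τ M / (p:ℝ)) ^ ((1:ℝ)+τ)) ^ (1/(2+τ))) *
          ((p:ℝ) ^ (-(1/(2+τ)))) ^ (r+1)) *
          ((if l + (r+1) ≤ k then ((p:ℝ) ^ (-(1/(2+τ)))) ^ (k - (r+1) - l) else 0) +
           (if k + (r+1) ≤ l then ((p:ℝ) ^ (-(1/(2+τ)))) ^ (l - (k + (r+1))) else 0))) :=
        Finset.sum_le_sum hterm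
    _ = (muEdges G.mu G.E * (M ^ (1/(2+τ)) * ((C2 τ M / (p:ℝ)) ^ ((1:ℝ)+τ)) ^ (1/(2+τ))) *
          ((p:ℝ) ^ (-(1/(2+τ)))) ^ (r+1)) *
        ∑ l ∈ u, ((if l + (r+1) ≤ k then ((p:ℝ) ^ (-(1/(2+τ)))) ^ (k - (r+1) - l) else 0) +
           (if k + (r+1) ≤ l then ((p:ℝ) ^ (-(1/(2+τ)))) ^ (l - (k + (r+1))) else 0)) := by
        rw [← Finset.mul_sum]
    _ ≤ (muEdges G.mu G.E * (M ^ (1/(2+τ)) * ((C2 τ M / (p:ℝ)) ^ ((1:ℝ)+τ)) ^ (1/(2+τ))) *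
          ((p:ℝ) ^ (-(1/(2+τ)))) ^ (r+1)) * 10 :=
        mul_le_mul_of_nonneg_left
          (geom_tail_sum ((p:ℝ) ^ (-(1/(2+τ)))) hQ0 hQ45 k r u) hA0
    _ = muEdges G.mu G.E *
          (M ^ (1/(2+τ)) * ((C2 τ M / (p:ℝ)) ^ ((1:ℝ)+τ)) ^ (1/(2+τ)) *
            ((p:ℝ) ^ (-(1/(2+τ)))) ^ (r+1) * 10) := by ring
    _ ≤ muEdges G.mu G.E * (1 / (4 * (p:ℝ) ^ ((1:ℝ) + τ/4))) :=
        mul_le_mul_of_nonneg_left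
          (numeric_bound τ M hτ0 hτ1 hM p r hp2 hr hpr) hμE0
    _ = muEdges G.mu G.E / (4 * (p:ℝ) ^ ((1:ℝ) + τ/4)) := by rw [mul_one_div]
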